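/- With the same setup as the previous lemma but with weights: if c(t) = (c₁(α₁t/√(α₁²+α₂²)), c₂(α₂t/√(α₁²+α₂²))) for α₁, α₂ > 0, then the Busemann function of this unit-speed geodesic in the product M₁ × M₂ equals (α₁B₁(x₁) + α₂B₂(x₂))/√(α₁²+α₂²). -/

import Mathlib

open Filter

theorem stmt_5 {M₁ M₂ : Type*} [MetricSpace M₁] [MetricSpace M₂]
    [CompleteSpace M₁] [CompleteSpace M₂]
    (c₁ : ℝ → M₁) (c₂ : ℝ → M₂)
    (hc₁ : ∀ s t : ℝ, dist (c₁ s) (c₁ t) = |s - t|)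
    (hc₂ : ∀ s t : ℝ, dist (c₂ s) (c₂ t) = |s - t|)
    (α₁ α₂ : ℝ) (hα₁ : 0 < α₁) (hα₂ : 0 < α₂)
    (x₁ : M₁) (x₂ : M₂) (b₁ b₂ : ℝ)
    (hB₁ : Tendsto (fun t : ℝ => dist x₁ (c₁ t) - t) atTop (nhds b₁))
    (hB₂ : Tendsto (fun t : ℝ => dist x₂ (c₂ t) - t) atTop (nhds b₂)) :
    Tendsto (fun t : ℝ =>
        Real.sqrt (dist x₁ (c₁ (α₁ * t / Real.sqrt (α₁ ^ 2 + α₂ ^ 2))) ^ 2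
            + dist x₂ (c₂ (α₂ * t / Real.sqrt (α₁ ^ 2 + α₂ ^ 2))) ^ 2) - t)
      atTop (nhds ((α₁ * b₁ + α₂ * b₂) / Real.sqrt (α₁ ^ 2 + α₂ ^ 2))) := by
  set s := Real.sqrt (α₁ ^ 2 + α₂ ^ 2) with hs
  have hs0 : 0 < s := Real.sqrt_pos.mpr (by positivity)
  have hssq : s ^ 2 = α₁ ^ 2 + α₂ ^ 2 := Real.sq_sqrt (by positivity)
  set e₁ : ℝ → ℝ := fun t => dist x₁ (c₁ (α₁ * t / s)) - α₁ * t / s with he₁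
  set e₂ : ℝ → ℝ := fun t => dist x₂ (c₂ (α₂ * t / s)) - α₂ * t / s with he₂
  have hu : Tendsto (fun t : ℝ => α₁ * t / s) atTop atTop :=
    (tendsto_id.const_mul_atTop hα₁).atTop_div_const hs0
  have hv : Tendsto (fun t : ℝ => α₂ * t / s) atTop atTop :=
    (tendsto_id.const_mul_atTop hα₂).atTop_div_const hs0
  have he1 : Tendsto e₁ atTop (nhds b₁) := hB₁.comp hu
  have he2 : Tendsto e₂ atTop (nhds b₂) := hB₂.comp hv
  have h10 : Tendsto (fun t => e₁ t / t) atTop (nhds 0) := he1.div_atTop tendsto_id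
  have h20 : Tendsto (fun t => e₂ t / t) atTop (nhds 0) := he2.div_atTop tendsto_id
  set g : ℝ → ℝ := fun t =>
    (2 * (α₁ * e₁ t + α₂ * e₂ t) / s + (e₁ t ^ 2 + e₂ t ^ 2) / t) /
      (Real.sqrt ((α₁ / s + e₁ t / t) ^ 2 + (α₂ / s + e₂ t / t) ^ 2) + 1) with hg
  have hlim : Tendsto g atTop (nhds ((α₁ * b₁ + α₂ * b₂) / s)) := by
    have hnum : Tendsto (fun t => 2 * (α₁ * e₁ t + α₂ * e₂ t) / s + (e₁ t ^ 2 + e₂ t ^ 2) / t)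
        atTop (nhds (2 * (α₁ * b₁ + α₂ * b₂) / s + 0)) :=
      ((((he1.const_mul α₁).add (he2.const_mul α₂)).const_mul 2).div_const s).add
        (((he1.pow 2).add (he2.pow 2)).div_atTop tendsto_id)
    have hden : Tendsto (fun t => Real.sqrt ((α₁ / s + e₁ t / t) ^ 2 + (α₂ / s + e₂ t / t) ^ 2) + 1)
        atTop (nhds 2) := by
      have h1 : Tendsto (fun t => (α₁ / s + e₁ t / t) ^ 2 + (α₂ / s + e₂ t / t) ^ 2)
          atTop (nhds ((α₁ / s + 0) ^ 2 + (α₂ / s + 0) ^ 2)) :=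
        ((tendsto_const_nhds.add h10).pow 2).add ((tendsto_const_nhds.add h20).pow 2)
      have h2 := h1.sqrt
      have h3 : Real.sqrt ((α₁ / s + 0) ^ 2 + (α₂ / s + 0) ^ 2) = 1 := by
        rw [add_zero, add_zero]
        have h4 : (α₁ / s) ^ 2 + (α₂ / s) ^ 2 = 1 := by
          field_simp
          linarith [hssq]
        rw [h4, Real.sqrt_one]
      rw [h3] at h2
      have := h2.add (tendsto_const_nhds (α := ℝ) (x := 1))
      norm_num at this
      exact this
    have hq := hnum.div hden (by norm_num)
    convert hq using 2
    rfl
    ring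
  refine Tendsto.congr' ?_ hlim
  filter_upwards [eventually_gt_atTop (0 : ℝ)] with t ht
  have ht' : t ≠ 0 := ne_of_gt ht
  set d₁ := dist x₁ (c₁ (α₁ * t / s)) with hd₁
  set d₂ := dist x₂ (c₂ (α₂ * t / s)) with hd₂
  have hd1 : d₁ = α₁ * t / s + e₁ t := by simp [he₁, hd₁]
  have hd2 : d₂ = α₂ * t / s + e₂ t := by simp [he₂, hd₂]
  have hd1n : 0 ≤ d₁ := dist_nonneg
  have hd2n : 0 ≤ d₂ := dist_nonneg
  set f := Real.sqrt (d₁ ^ 2 + d₂ ^ 2) with hf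
  have hfsq : f ^ 2 = d₁ ^ 2 + d₂ ^ 2 := Real.sq_sqrt (by positivity)
  have hf0 : 0 ≤ f := Real.sqrt_nonneg _
  -- rewrite the sqrt inside g
  have hinner : (α₁ / s + e₁ t / t) ^ 2 + (α₂ / s + e₂ t / t) ^ 2 = (d₁ ^ 2 + d₂ ^ 2) / t ^ 2 := by
    have h1 : α₁ / s + e₁ t / t = d₁ / t := by
      rw [hd1]; field_simp
    have h2 : α₂ / s + e₂ t / t = d₂ / t := by
      rw [hd2]; field_simp
    rw [h1, h2]; field_simp
  have hsqrt : Real.sqrt ((α₁ / s + e₁ t / t) ^ 2 + (α₂ / s + e₂ t / t) ^ 2) = f / t := by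
    rw [hinner, Real.sqrt_div (by positivity), Real.sqrt_sq ht.le]
  have hkey : f ^ 2 - t ^ 2 = 2 * t * (α₁ * e₁ t + α₂ * e₂ t) / s + (e₁ t ^ 2 + e₂ t ^ 2) := by
    have h1 : e₁ t = d₁ - α₁ * t / s := by rw [hd1]; ring
    have h2 : e₂ t = d₂ - α₂ * t / s := by rw [hd2]; ring
    rw [hfsq, h1, h2]
    field_simp
    linear_combination (-(t ^ 2)) * hssq
  show g t = f - t
  rw [hg]
  simp only
  rw [hsqrt]
  have hft : f / t + 1 = (f + t) / t := by field_simp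
  rw [hft]
  have hft2 : (0:ℝ) < f + t := by linarith
  rw [div_div_eq_mul_div, div_eq_iff (ne_of_gt hft2)]
  have hnumt : (2 * (α₁ * e₁ t + α₂ * e₂ t) / s + (e₁ t ^ 2 + e₂ t ^ 2) / t) * t
      = f ^ 2 - t ^ 2 := by
    rw [hkey]; field_simp
  rw [hnumt]; ring
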